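/- Separation of the Euler Hamiltonian in prolate ellipsoidal coordinates: let ξ > 1, η ∈ (−1,1), φ ∈ ℝ and p_ξ, p_η, l ∈ ℝ. If p ∈ ℝ³ satisfies ⟨p, ∂Φ/∂ξ(ξ,η,φ)⟩ = p_ξ, ⟨p, ∂Φ/∂η(ξ,η,φ)⟩ = p_η, and ⟨p, ∂Φ/∂φ(ξ,η,φ)⟩ = l, then L_z(Φ(ξ,η,φ), p) = l and H(Φ(ξ,η,φ), p) = (H_ξ + H_η)/(ξ² − η²). -/

import Mathlib

noncomputable section

open Real Filter Topology
open scoped RealInnerProductSpace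

/-- Euclidean 3-space. -/
abbrev R3 : Type := EuclideanSpace ℝ (Fin 3)

/-- The vector `(x, y, z)` in `R3`. -/
def vec3 (x y z : ℝ) : R3 := (WithLp.equiv 2 (Fin 3 → ℝ)).symm ![x, y, z]

/-- The first center `o₁ = (0,0,-a)`. -/
def ctr1 (a : ℝ) : R3 := vec3 0 0 (-a)

/-- The second center `o₂ = (0,0,a)`. -/
def ctr2 (a : ℝ) : R3 := vec3 0 0 a

/-- The Euler two-center potential `V(q) = -μ₁/r₁(q) - μ₂/r₂(q)`. -/
def eulerV (a μ1 μ2 : ℝ) (q : R3) : ℝ := -μ1 / ‖q - ctr1 a‖ - μ2 / ‖q - ctr2 a‖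

/-- The angular momentum `L_z(q,p) = x p_y - y p_x`. -/
def angMom (q p : R3) : ℝ := q 0 * p 1 - q 1 * p 0

/-- The cross product `q × p` in `R3`. -/
def cross3 (q p : R3) : R3 :=
  vec3 (q 1 * p 2 - q 2 * p 1) (q 2 * p 0 - q 0 * p 2) (q 0 * p 1 - q 1 * p 0)

/-- The Euler Hamiltonian `H(q,p) = ‖p‖²/2 + V(q)`. -/
def eulerH (a μ1 μ2 : ℝ) (q p : R3) : ℝ := ‖p‖ ^ 2 / 2 + eulerV a μ1 μ2 q

/-- The separation constant
`G(q,p) = H + (‖q×p‖² - a²(pₓ²+p_y²))/2 + a(z+a)μ₁/r₁ - a(z-a)μ₂/r₂`. -/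
def eulerG (a μ1 μ2 : ℝ) (q p : R3) : ℝ :=
  eulerH a μ1 μ2 q p + (‖cross3 q p‖ ^ 2 - a ^ 2 * ((p 0) ^ 2 + (p 1) ^ 2)) / 2
    + a * (q 2 + a) * μ1 / ‖q - ctr1 a‖ - a * (q 2 - a) * μ2 / ‖q - ctr2 a‖

/-- The prolate ellipsoidal coordinate map
`Φ(ξ,η,φ) = (a√((ξ²−1)(1−η²)) cos φ, a√((ξ²−1)(1−η²)) sin φ, aξη)`. -/
def phiMap (a ξ η φ : ℝ) : R3 :=
  vec3 (a * Real.sqrt ((ξ ^ 2 - 1) * (1 - η ^ 2)) * Real.cos φ)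
       (a * Real.sqrt ((ξ ^ 2 - 1) * (1 - η ^ 2)) * Real.sin φ)
       (a * ξ * η)

/-- The `ξ`-part of the separated Hamiltonian:
`H_ξ = (ξ²−1)p_ξ²/(2a²) + l²/(2a²(ξ²−1)) − (μ₁+μ₂)ξ/a`. -/
def Hxi (a μ1 μ2 ξ pξ l : ℝ) : ℝ :=
  (ξ ^ 2 - 1) * pξ ^ 2 / (2 * a ^ 2) + l ^ 2 / (2 * a ^ 2 * (ξ ^ 2 - 1)) - (μ1 + μ2) * ξ / a

/-- The `η`-part of the separated Hamiltonian:
`H_η = (1−η²)p_η²/(2a²) + l²/(2a²(1−η²)) + (μ₁−μ₂)η/a`. -/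
def Heta (a μ1 μ2 η pη l : ℝ) : ℝ :=
  (1 - η ^ 2) * pη ^ 2 / (2 * a ^ 2) + l ^ 2 / (2 * a ^ 2 * (1 - η ^ 2)) + (μ1 - μ2) * η / a


section Aux

lemma hasDerivAt_vec3 {f g h : ℝ → ℝ} {f' g' h' x : ℝ}
    (hf : HasDerivAt f f' x) (hg : HasDerivAt g g' x) (hh : HasDerivAt h h' x) :
    HasDerivAt (fun t => vec3 (f t) (g t) (h t)) (vec3 f' g' h') x := by
  have hpi : HasDerivAt (fun t => ![f t, g t, h t]) ![f', g', h'] x := by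
    rw [hasDerivAt_pi]; intro i; fin_cases i <;> simpa
  exact ((EuclideanSpace.equiv (Fin 3) ℝ).symm.toContinuousLinearMap.hasFDerivAt.comp_hasDerivAt x hpi)

lemma inner_vec3 (p : R3) (x y z : ℝ) : ⟪p, vec3 x y z⟫ = p 0 * x + p 1 * y + p 2 * z := by
  simp [vec3, PiLp.inner_apply, Fin.sum_univ_three]; ring

lemma vec3_sub (x y z x' y' z' : ℝ) :
    vec3 x y z - vec3 x' y' z' = vec3 (x - x') (y - y') (z - z') := by
  ext i; fin_cases i <;> rfl

lemma norm_sq_R3 (p : R3) : ‖p‖ ^ 2 = (p 0) ^ 2 + (p 1) ^ 2 + (p 2) ^ 2 := by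
  rw [← real_inner_self_eq_norm_sq]
  simp only [PiLp.inner_apply, Fin.sum_univ_three, RCLike.inner_apply, conj_trivial]; ring

end Aux

/-- Separation of the Euler Hamiltonian in prolate ellipsoidal coordinates:
if `⟨p, ∂Φ/∂ξ⟩ = p_ξ`, `⟨p, ∂Φ/∂η⟩ = p_η` and `⟨p, ∂Φ/∂φ⟩ = l`, then
`L_z(Φ, p) = l` and `H(Φ, p) = (H_ξ + H_η)/(ξ² − η²)`. -/
theorem statement5 (a μ1 μ2 : ℝ) (ha : 0 < a) (ξ η φ pξ pη l : ℝ)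
    (hξ : 1 < ξ) (hη : η ∈ Set.Ioo (-1 : ℝ) 1) (p : R3)
    (h1 : ⟪p, deriv (fun s => phiMap a s η φ) ξ⟫ = pξ)
    (h2 : ⟪p, deriv (fun s => phiMap a ξ s φ) η⟫ = pη)
    (h3 : ⟪p, deriv (fun s => phiMap a ξ η s) φ⟫ = l) :
    angMom (phiMap a ξ η φ) p = l ∧
    eulerH a μ1 μ2 (phiMap a ξ η φ) p =
      (Hxi a μ1 μ2 ξ pξ l + Heta a μ1 μ2 η pη l) / (ξ ^ 2 - η ^ 2) := by
  obtain ⟨hη1, hη2⟩ := hη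
  have hxi1 : 0 < ξ ^ 2 - 1 := by nlinarith
  have heta1 : 0 < 1 - η ^ 2 := by nlinarith
  have hX : 0 < (ξ ^ 2 - 1) * (1 - η ^ 2) := mul_pos hxi1 heta1
  have hne : (ξ ^ 2 - 1) * (1 - η ^ 2) ≠ 0 := ne_of_gt hX
  set u := Real.sqrt ((ξ ^ 2 - 1) * (1 - η ^ 2)) with hudef
  have hu : 0 < u := Real.sqrt_pos.mpr hX
  have hu2 : u ^ 2 = (ξ ^ 2 - 1) * (1 - η ^ 2) := Real.sq_sqrt hX.le
  -- ξ-derivative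
  have hinner1 : HasDerivAt (fun s : ℝ => (s ^ 2 - 1) * (1 - η ^ 2)) (2 * ξ * (1 - η ^ 2)) ξ := by
    have h := ((hasDerivAt_pow 2 ξ).sub_const 1).mul_const (1 - η ^ 2)
    refine h.congr_deriv ?_; push_cast; ring
  have hsq1 : HasDerivAt (fun s : ℝ => Real.sqrt ((s ^ 2 - 1) * (1 - η ^ 2)))
      (1 / (2 * u) * (2 * ξ * (1 - η ^ 2))) ξ :=
    (Real.hasDerivAt_sqrt hne).comp ξ hinner1
  have h3rd1 : HasDerivAt (fun s : ℝ => a * s * η) (a * η) ξ := by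
    simpa using ((hasDerivAt_id ξ).const_mul a).mul_const η
  have hDξ : HasDerivAt (fun s => phiMap a s η φ)
      (vec3 (a * (1 / (2 * u) * (2 * ξ * (1 - η ^ 2))) * Real.cos φ)
            (a * (1 / (2 * u) * (2 * ξ * (1 - η ^ 2))) * Real.sin φ) (a * η)) ξ := by
    unfold phiMap
    exact hasDerivAt_vec3 ((hsq1.const_mul a).mul_const (Real.cos φ))
      ((hsq1.const_mul a).mul_const (Real.sin φ)) h3rd1
  -- η-derivative
  have hinner2 : HasDerivAt (fun s : ℝ => (ξ ^ 2 - 1) * (1 - s ^ 2)) ((ξ ^ 2 - 1) * (-(2 * η))) η := by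
    have h := ((hasDerivAt_pow 2 η).const_sub 1).const_mul (ξ ^ 2 - 1)
    refine h.congr_deriv ?_; push_cast; ring
  have hsq2 : HasDerivAt (fun s : ℝ => Real.sqrt ((ξ ^ 2 - 1) * (1 - s ^ 2)))
      (1 / (2 * u) * ((ξ ^ 2 - 1) * (-(2 * η)))) η :=
    (Real.hasDerivAt_sqrt hne).comp η hinner2
  have h3rd2 : HasDerivAt (fun s : ℝ => a * ξ * s) (a * ξ) η := by
    simpa using (hasDerivAt_id η).const_mul (a * ξ)
  have hDη : HasDerivAt (fun s => phiMap a ξ s φ)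
      (vec3 (a * (1 / (2 * u) * ((ξ ^ 2 - 1) * (-(2 * η)))) * Real.cos φ)
            (a * (1 / (2 * u) * ((ξ ^ 2 - 1) * (-(2 * η)))) * Real.sin φ) (a * ξ)) η := by
    unfold phiMap
    exact hasDerivAt_vec3 ((hsq2.const_mul a).mul_const (Real.cos φ))
      ((hsq2.const_mul a).mul_const (Real.sin φ)) h3rd2
  -- φ-derivative
  have hDφ : HasDerivAt (fun s => phiMap a ξ η s)
      (vec3 ((a * u) * (-Real.sin φ)) ((a * u) * Real.cos φ) 0) φ := by
    unfold phiMap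
    exact hasDerivAt_vec3 ((Real.hasDerivAt_cos φ).const_mul (a * u))
      ((Real.hasDerivAt_sin φ).const_mul (a * u)) (hasDerivAt_const φ (a * ξ * η))
  rw [hDξ.deriv, inner_vec3] at h1
  rw [hDη.deriv, inner_vec3] at h2
  rw [hDφ.deriv, inner_vec3] at h3
  have H1 : u * pξ = a * ξ * (1 - η ^ 2) * (Real.cos φ * p 0 + Real.sin φ * p 1)
      + a * η * u * p 2 := by
    rw [← h1]; field_simp
  have H2 : u * pη = -(a * η * (ξ ^ 2 - 1)) * (Real.cos φ * p 0 + Real.sin φ * p 1)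
      + a * ξ * u * p 2 := by
    rw [← h2]; field_simp; ring
  have H3 : l = a * u * (Real.cos φ * p 1 - Real.sin φ * p 0) := by
    rw [← h3]; ring
  have ha' : a ≠ 0 := ne_of_gt ha
  have hsum : 0 < ξ + η := by linarith
  have hdiff : 0 < ξ - η := by linarith
  have hK : 0 < ξ ^ 2 - η ^ 2 := by nlinarith
  constructor
  · simp only [angMom, phiMap, vec3]
    simp only [WithLp.equiv_symm_apply, PiLp.toLp_apply, Matrix.cons_val_zero, Matrix.cons_val_one,
      Matrix.head_cons]
    rw [← hudef]
    linarith [H3, mul_comm (a * u * Real.cos φ) (p 1)]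
  · -- distances
    have hr1 : ‖phiMap a ξ η φ - ctr1 a‖ = a * (ξ + η) := by
      have hsq : ‖phiMap a ξ η φ - ctr1 a‖ ^ 2 = (a * (ξ + η)) ^ 2 := by
        simp only [phiMap, ctr1, vec3_sub]
        rw [norm_sq_R3]
        simp only [vec3, WithLp.equiv_symm_apply, PiLp.toLp_apply, Matrix.cons_val_zero,
          Matrix.cons_val_one, Matrix.head_cons, Matrix.cons_val_two, Matrix.tail_cons]
        rw [← hudef]
        linear_combination (a ^ 2 * Real.cos φ ^ 2 + a ^ 2 * Real.sin φ ^ 2) * hu2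
          + a ^ 2 * (ξ ^ 2 - 1) * (1 - η ^ 2) * (Real.sin_sq_add_cos_sq φ)
      rw [← Real.sqrt_sq (norm_nonneg _), hsq, Real.sqrt_sq (by positivity)]
    have hr2 : ‖phiMap a ξ η φ - ctr2 a‖ = a * (ξ - η) := by
      have hsq : ‖phiMap a ξ η φ - ctr2 a‖ ^ 2 = (a * (ξ - η)) ^ 2 := by
        simp only [phiMap, ctr2, vec3_sub]
        rw [norm_sq_R3]
        simp only [vec3, WithLp.equiv_symm_apply, PiLp.toLp_apply, Matrix.cons_val_zero,
          Matrix.cons_val_one, Matrix.head_cons, Matrix.cons_val_two, Matrix.tail_cons]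
        rw [← hudef]
        linear_combination (a ^ 2 * Real.cos φ ^ 2 + a ^ 2 * Real.sin φ ^ 2) * hu2
          + a ^ 2 * (ξ ^ 2 - 1) * (1 - η ^ 2) * (Real.sin_sq_add_cos_sq φ)
      rw [← Real.sqrt_sq (norm_nonneg _), hsq, Real.sqrt_sq (by positivity)]
    have hnorm : ‖p‖ ^ 2 = (Real.cos φ * p 0 + Real.sin φ * p 1) ^ 2
        + (Real.cos φ * p 1 - Real.sin φ * p 0) ^ 2 + (p 2) ^ 2 := by
      rw [norm_sq_R3]
      linear_combination (-((p 0) ^ 2 + (p 1) ^ 2)) * (Real.sin_sq_add_cos_sq φ)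
    -- eliminated relations
    have eS : u * (ξ * pξ - η * pη) = a * (ξ ^ 2 - η ^ 2) * (Real.cos φ * p 0 + Real.sin φ * p 1) := by
      linear_combination ξ * H1 - η * H2
    have eS2 : (Real.cos φ * p 0 + Real.sin φ * p 1) ^ 2
        = (ξ ^ 2 - 1) * (1 - η ^ 2) * (ξ * pξ - η * pη) ^ 2 / (a ^ 2 * (ξ ^ 2 - η ^ 2) ^ 2) := by
      rw [eq_div_iff (by positivity)]
      linear_combination ((ξ * pξ - η * pη) ^ 2) * hu2
        - (u * (ξ * pξ - η * pη) + a * (ξ ^ 2 - η ^ 2) * (Real.cos φ * p 0 + Real.sin φ * p 1)) * eS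
    have eP : u * (η * (ξ ^ 2 - 1) * pξ + ξ * (1 - η ^ 2) * pη) = u * (a * (ξ ^ 2 - η ^ 2) * p 2) := by
      linear_combination η * (ξ ^ 2 - 1) * H1 + ξ * (1 - η ^ 2) * H2
    have eP' : η * (ξ ^ 2 - 1) * pξ + ξ * (1 - η ^ 2) * pη = a * (ξ ^ 2 - η ^ 2) * p 2 :=
      mul_left_cancel₀ (ne_of_gt hu) eP
    have eP2 : (p 2) ^ 2
        = (η * (ξ ^ 2 - 1) * pξ + ξ * (1 - η ^ 2) * pη) ^ 2 / (a ^ 2 * (ξ ^ 2 - η ^ 2) ^ 2) := by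
      rw [eq_div_iff (by positivity)]
      linear_combination (-(η * (ξ ^ 2 - 1) * pξ + ξ * (1 - η ^ 2) * pη
        + a * (ξ ^ 2 - η ^ 2) * p 2)) * eP'
    have eT2 : (Real.cos φ * p 1 - Real.sin φ * p 0) ^ 2
        = l ^ 2 / (a ^ 2 * ((ξ ^ 2 - 1) * (1 - η ^ 2))) := by
      rw [eq_div_iff (by positivity)]
      linear_combination (-(a ^ 2 * (Real.cos φ * p 1 - Real.sin φ * p 0) ^ 2)) * hu2
        - (l + a * u * (Real.cos φ * p 1 - Real.sin φ * p 0)) * H3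
    simp only [eulerH, eulerV, Hxi, Heta]
    rw [hr1, hr2, hnorm, eS2, eP2, eT2]
    field_simp
    ring
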